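/- For fixed x₀ ∈ (0,1), the function F(y) = (e^{(x₀-2)y} - e^{-x₀ y})/(2(1 - e^{-2y})) is strictly increasing on the interval ((ln(2-x₀) - ln x₀)/(2(1-x₀)), ∞). -/

import Mathlib

open Real Set

lemma sinh_lt_mul_cosh {t : ℝ} (ht : 0 < t) : Real.sinh t < t * Real.cosh t := by
  have h : StrictMonoOn (fun s : ℝ => s * Real.cosh s - Real.sinh s) (Set.Ici 0) := by
    apply strictMonoOn_of_deriv_pos (convex_Ici 0)
    · fun_prop
    · intro s hs
      rw [interior_Ici, Set.mem_Ioi] at hs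
      have hd : HasDerivAt (fun s : ℝ => s * Real.cosh s - Real.sinh s)
          (1 * Real.cosh s + s * Real.sinh s - Real.cosh s) s :=
        ((hasDerivAt_id s).mul (Real.hasDerivAt_cosh s)).sub (Real.hasDerivAt_sinh s)
      rw [hd.deriv]
      have h1 : 0 < Real.sinh s := Real.sinh_pos_iff.mpr hs
      have h2 : 0 < s * Real.sinh s := mul_pos hs h1
      linarith
  have := h Set.self_mem_Ici (Set.mem_Ici.mpr ht.le) ht
  simpa using this

lemma sinh_div_strictMono : StrictMonoOn (fun t : ℝ => Real.sinh t / t) (Set.Ioi 0) := by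
  apply strictMonoOn_of_deriv_pos (convex_Ioi 0)
  · apply ContinuousOn.div (by fun_prop) (by fun_prop)
    intro t ht; exact ne_of_gt (Set.mem_Ioi.mp ht)
  · intro t ht
    rw [interior_Ioi, Set.mem_Ioi] at ht
    have hd : HasDerivAt (fun t : ℝ => Real.sinh t / t)
        ((Real.cosh t * t - Real.sinh t * 1) / t ^ 2) t :=
      (Real.hasDerivAt_sinh t).div (hasDerivAt_id t) (ne_of_gt ht)
    rw [hd.deriv]
    have h1 := sinh_lt_mul_cosh ht
    have ht2 : (0:ℝ) < t ^ 2 := by positivity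
    apply div_pos _ ht2
    nlinarith

lemma key_ineq {u b y : ℝ} (hu : 0 < u) (hub : u < b) (hy : 0 < y) :
    b * Real.sinh (u * y) < u * Real.sinh (b * y) := by
  have hb : 0 < b := lt_trans hu hub
  have h1 : u * y < b * y := by nlinarith
  have h2 := sinh_div_strictMono (Set.mem_Ioi.mpr (mul_pos hu hy))
    (Set.mem_Ioi.mpr (mul_pos hb hy)) h1
  simp only at h2
  rw [div_lt_div_iff₀ (mul_pos hu hy) (mul_pos hb hy)] at h2
  nlinarith

theorem stmt_6 (x₀ : ℝ) (hx₀ : x₀ ∈ Set.Ioo (0:ℝ) 1) :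
    StrictMonoOn (fun y : ℝ =>
        (Real.exp ((x₀ - 2) * y) - Real.exp (-x₀ * y)) / (2 * (1 - Real.exp (-2 * y))))
      (Set.Ioi ((Real.log (2 - x₀) - Real.log x₀) / (2 * (1 - x₀)))) := by
  obtain ⟨hx0, hx1⟩ := hx₀
  set y₀ := (Real.log (2 - x₀) - Real.log x₀) / (2 * (1 - x₀)) with hy₀def
  have hy₀pos : 0 < y₀ := by
    apply div_pos
    · have h1 : 0 < Real.log (2 - x₀) := Real.log_pos (by linarith)
      have h2 : Real.log x₀ < 0 := Real.log_neg hx0 hx1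
      linarith
    · linarith
  -- for y > y₀, derivative setup
  have hDpos : ∀ y : ℝ, 0 < y → 0 < 2 * (1 - Real.exp (-2 * y)) := by
    intro y hy
    have : Real.exp (-2 * y) < 1 := Real.exp_lt_one_iff.mpr (by linarith)
    linarith
  apply strictMonoOn_of_deriv_pos (convex_Ioi y₀)
  · apply ContinuousOn.div (by fun_prop) (by fun_prop)
    intro y hy
    exact ne_of_gt (hDpos y (lt_trans hy₀pos (Set.mem_Ioi.mp hy)))
  · intro y hy
    rw [interior_Ioi, Set.mem_Ioi] at hy
    have hypos : 0 < y := lt_trans hy₀pos hy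
    have hN : HasDerivAt (fun y : ℝ => Real.exp ((x₀ - 2) * y) - Real.exp (-x₀ * y))
        (Real.exp ((x₀ - 2) * y) * (x₀ - 2) - Real.exp (-x₀ * y) * (-x₀)) y := by
      have := (((hasDerivAt_id y).const_mul (x₀ - 2)).exp).sub
        (((hasDerivAt_id y).const_mul (-x₀)).exp)
      simpa [Pi.sub_def] using this
    have hD : HasDerivAt (fun y : ℝ => 2 * (1 - Real.exp (-2 * y)))
        (2 * (0 - Real.exp (-2 * y) * (-2))) y := by
      have := (((hasDerivAt_const y (1:ℝ)).sub
        (((hasDerivAt_id y).const_mul (-2)).exp)).const_mul 2)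
      simpa using this
    have hDne : 2 * (1 - Real.exp (-2 * y)) ≠ 0 := ne_of_gt (hDpos y hypos)
    have hF := hN.div hD hDne
    rw [show (fun y : ℝ => (Real.exp ((x₀ - 2) * y) - Real.exp (-x₀ * y)) / (2 * (1 - Real.exp (-2 * y)))) = ((fun y : ℝ => Real.exp ((x₀ - 2) * y) - Real.exp (-x₀ * y)) / fun y : ℝ => 2 * (1 - Real.exp (-2 * y))) from rfl, hF.deriv]
    apply div_pos _ (by positivity)
    -- abbreviations
    set A := Real.exp (x₀ * y) with hA
    set B := Real.exp y with hB
    have hApos : 0 < A := Real.exp_pos _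
    have hBpos : 0 < B := Real.exp_pos _
    have e1 : Real.exp ((x₀ - 2) * y) = A / B ^ 2 := by
      rw [show (x₀ - 2) * y = x₀ * y - (y + y) by ring, Real.exp_sub, Real.exp_add]
      rw [hA, hB]; ring
    have e2 : Real.exp (-x₀ * y) = A⁻¹ := by
      rw [show -x₀ * y = -(x₀ * y) by ring, Real.exp_neg]
    have e3 : Real.exp (-2 * y) = (B ^ 2)⁻¹ := by
      rw [show -2 * y = -(y + y) by ring, Real.exp_neg, Real.exp_add, hB]; ring_nf
    have key := key_ineq hx0 (show x₀ < 2 - x₀ by linarith) hypos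
    rw [Real.sinh_eq, Real.sinh_eq] at key
    have e4 : Real.exp ((2 - x₀) * y) = B ^ 2 / A := by
      rw [show (2 - x₀) * y = (y + y) - x₀ * y by ring, Real.exp_sub, Real.exp_add]
      rw [hA, hB]; ring
    have e5 : Real.exp (-(x₀ * y)) = A⁻¹ := Real.exp_neg _
    have e6 : Real.exp (-((2 - x₀) * y)) = A / B ^ 2 := by
      rw [Real.exp_neg, e4]; field_simp
    rw [e5, e4, e6, ← hA] at key
    have hB2 : (0:ℝ) < B ^ 2 := by positivity
    have key2 : (2 - x₀) * (A - A⁻¹) < x₀ * (B ^ 2 / A - A / B ^ 2) := by linarith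
    have expand : (Real.exp ((x₀ - 2) * y) * (x₀ - 2) - Real.exp (-x₀ * y) * (-x₀)) *
          (2 * (1 - Real.exp (-2 * y))) -
        (Real.exp ((x₀ - 2) * y) - Real.exp (-x₀ * y)) * (2 * (0 - Real.exp (-2 * y) * (-2)))
        = (2 / B ^ 2) * (x₀ * (B ^ 2 / A - A / B ^ 2) - (2 - x₀) * (A - A⁻¹)) := by
      rw [e1, e2, e3]; field_simp; ring
    rw [expand]
    apply mul_pos (by positivity)
    linarith [key2]
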